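/- Let σ be a finite set of distinct nonzero real numbers, let c : σ → ℝ, let r ∈ ℝ, and let ε > 0 be such that 1 − α·t > 0 for every α ∈ σ and every t ∈ (0, ε). If r + Σ_{α ∈ σ} c(α)·√(1 − α·t) = 0 for all t ∈ (0, ε), then r = 0 and c(α) = 0 for every α ∈ σ. -/

import Mathlib

open Real Filter

/-- Differentiation step: if `Σ d(α)·(1-αt)^p = 0` on `(0,ε)` then
`Σ d(α)·α·(1-αt)^(p-1) = 0` on `(0,ε)`. -/
lemma stmt3_step (σ : Finset ℝ) (d : ℝ → ℝ) (ε : ℝ)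
    (hpos : ∀ α ∈ σ, ∀ t ∈ Set.Ioo (0:ℝ) ε, 0 < 1 - α * t) (p : ℝ) (hp : p ≠ 0)
    (h : ∀ t ∈ Set.Ioo (0:ℝ) ε, ∑ α ∈ σ, d α * (1 - α*t) ^ p = 0) :
    ∀ t ∈ Set.Ioo (0:ℝ) ε, ∑ α ∈ σ, (d α * α) * (1 - α*t) ^ (p - 1) = 0 := by
  intro t ht
  have hd : HasDerivAt (fun t => ∑ α ∈ σ, d α * (1 - α*t) ^ p)
      (∑ α ∈ σ, d α * (p * (1 - α*t) ^ (p - 1) * (-α))) t := by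
    apply HasDerivAt.fun_sum
    intro α hα
    have h1 : HasDerivAt (fun t : ℝ => 1 - α * t) (-α) t := by
      simpa using ((hasDerivAt_const t (1:ℝ)).fun_sub ((hasDerivAt_id t).const_mul α))
    have h2 : HasDerivAt (fun x : ℝ => x ^ p) (p * (1 - α*t) ^ (p - 1)) (1 - α*t) :=
      Real.hasDerivAt_rpow_const (Or.inl (hpos α hα t ht).ne')
    exact ((h2.comp t h1)).const_mul (d α)
  have hzero : HasDerivAt (fun t : ℝ => ∑ α ∈ σ, d α * (1 - α*t) ^ p) 0 t := by
    have : (fun t : ℝ => ∑ α ∈ σ, d α * (1 - α*t) ^ p) =ᶠ[nhds t] fun _ => (0:ℝ) := by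
      filter_upwards [isOpen_Ioo.mem_nhds ht] with s hs using h s hs
    exact (hasDerivAt_const t (0:ℝ)).congr_of_eventuallyEq this
  have := hd.unique hzero
  have h3 : ∑ α ∈ σ, (d α * α) * (1 - α*t) ^ (p - 1) = (-p)⁻¹ * ∑ α ∈ σ, d α * (p * (1 - α*t) ^ (p - 1) * (-α)) := by
    rw [Finset.mul_sum]
    apply Finset.sum_congr rfl
    intro α hα
    field_simp
  rw [h3, this, mul_zero]

/-- Limit step: initial value of the sum at `t = 0`. -/
lemma stmt3_limit (σ : Finset ℝ) (d : ℝ → ℝ) (ε : ℝ) (hε : 0 < ε) (p : ℝ)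
    (h : ∀ t ∈ Set.Ioo (0:ℝ) ε, ∑ α ∈ σ, d α * (1 - α*t) ^ p = 0) :
    ∑ α ∈ σ, d α = 0 := by
  have hne : (nhdsWithin (0:ℝ) (Set.Ioo 0 ε)).NeBot := by
    apply mem_closure_iff_nhdsWithin_neBot.mp
    rw [closure_Ioo hε.ne]
    exact ⟨le_rfl, hε.le⟩
  have hcont : ContinuousAt (fun t : ℝ => ∑ α ∈ σ, d α * (1 - α*t) ^ p) 0 := by
    have : ∀ α ∈ σ, ContinuousAt (fun t : ℝ => d α * (1 - α*t) ^ p) 0 := by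
      intro α hα
      apply ContinuousAt.mul continuousAt_const
      have hin : ContinuousAt (fun t : ℝ => 1 - α * t) 0 := by fun_prop
      exact hin.rpow_const (Or.inl (by norm_num))
    exact tendsto_finset_sum σ this
  have h1 : Tendsto (fun t : ℝ => ∑ α ∈ σ, d α * (1 - α*t) ^ p)
      (nhdsWithin (0:ℝ) (Set.Ioo 0 ε)) (nhds (∑ α ∈ σ, d α * (1 - α*0) ^ p)) :=
    hcont.continuousWithinAt.tendsto
  have h2 : Tendsto (fun t : ℝ => ∑ α ∈ σ, d α * (1 - α*t) ^ p)
      (nhdsWithin (0:ℝ) (Set.Ioo 0 ε)) (nhds 0) := by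
    apply Tendsto.congr' _ tendsto_const_nhds
    filter_upwards [self_mem_nhdsWithin] with s hs using (h s hs).symm
  have := tendsto_nhds_unique h1 h2
  simpa using this

open Real Filter Polynomial in
/-- If `σ` is a finite set of nonzero reals and
`r + Σ_{α ∈ σ} c(α)·√(1 − α t) = 0` for all `t ∈ (0, ε)` (with `1 - α t > 0` there),
then `r = 0` and all coefficients `c(α)` vanish. -/
theorem stmt3 (σ : Finset ℝ) (hσ : ∀ α ∈ σ, α ≠ 0)
    (c : ℝ → ℝ) (r : ℝ) (ε : ℝ) (hε : 0 < ε)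
    (hpos : ∀ α ∈ σ, ∀ t ∈ Set.Ioo (0 : ℝ) ε, 0 < 1 - α * t)
    (heq : ∀ t ∈ Set.Ioo (0 : ℝ) ε, r + ∑ α ∈ σ, c α * Real.sqrt (1 - α * t) = 0) :
    r = 0 ∧ ∀ α ∈ σ, c α = 0 := by
  classical
  have h0σ : (0:ℝ) ∉ σ := fun h => hσ 0 h rfl
  set τ : Finset ℝ := insert (0:ℝ) σ with hτ
  set d : ℝ → ℝ := fun α => if α = 0 then r else c α with hd
  have hposτ : ∀ α ∈ τ, ∀ t ∈ Set.Ioo (0:ℝ) ε, 0 < 1 - α * t := by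
    intro α hα t ht
    rcases Finset.mem_insert.mp hα with h | h
    · simp [h]
    · exact hpos α h t ht
  -- base identity with rpow
  have hbase : ∀ t ∈ Set.Ioo (0:ℝ) ε,
      ∑ α ∈ τ, (d α * α ^ (0:ℕ)) * (1 - α * t) ^ ((1:ℝ)/2 - (0:ℕ)) = 0 := by
    intro t ht
    have := heq t ht
    rw [hτ, Finset.sum_insert h0σ]
    simp only [pow_zero, mul_one, Nat.cast_zero, sub_zero]
    have h1 : d 0 * (1 - 0 * t) ^ ((1:ℝ)/2) = r := by simp [hd]
    rw [h1]
    have h2 : ∀ α ∈ σ, d α * (1 - α * t) ^ ((1:ℝ)/2) = c α * Real.sqrt (1 - α * t) := by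
      intro α hα
      rw [hd, Real.sqrt_eq_rpow]
      simp [hσ α hα]
    rw [Finset.sum_congr rfl h2]
    exact this
  -- iterate differentiation
  have hiter : ∀ n : ℕ, ∀ t ∈ Set.Ioo (0:ℝ) ε,
      ∑ α ∈ τ, (d α * α ^ n) * (1 - α * t) ^ ((1:ℝ)/2 - n) = 0 := by
    intro n
    induction n with
    | zero => exact hbase
    | succ n ih =>
      have hp : ((1:ℝ)/2 - n) ≠ 0 := by
        intro h
        have : (1:ℝ) = 2 * n := by linarith [h]
        have : (1:ℤ) = 2 * n := by exact_mod_cast this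
        omega
      have := stmt3_step τ (fun α => d α * α ^ n) ε hposτ ((1:ℝ)/2 - n) hp ih
      intro t ht
      have h2 := this t ht
      rw [← h2]
      apply Finset.sum_congr rfl
      intro α hα
      rw [pow_succ]
      ring_nf
      congr 1
      push_cast
      ring_nf
  -- moments
  have hmom : ∀ n : ℕ, ∑ α ∈ τ, d α * α ^ n = 0 := by
    intro n
    exact stmt3_limit τ (fun α => d α * α ^ n) ε hε ((1:ℝ)/2 - n) (hiter n)
  have hmomσ : ∀ n : ℕ, 1 ≤ n → ∑ α ∈ σ, c α * α ^ n = 0 := by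
    intro n hn
    have := hmom n
    rw [hτ, Finset.sum_insert h0σ] at this
    have hz : d 0 * (0:ℝ) ^ n = 0 := by
      rw [zero_pow (by omega)]; ring
    rw [hz, zero_add] at this
    rw [← this]
    apply Finset.sum_congr rfl
    intro α hα
    simp [hd, hσ α hα]
  -- polynomial / Vandermonde argument
  have hc : ∀ β ∈ σ, c β = 0 := by
    intro β hβ
    set Q : Polynomial ℝ := X * ∏ α ∈ σ.erase β, (X - C α) with hQ
    have hQ0 : Q.coeff 0 = 0 := by
      rw [hQ, Polynomial.mul_coeff_zero, Polynomial.coeff_X_zero, zero_mul]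
    have hsum : ∑ α ∈ σ, c α * Q.eval α = 0 := by
      have : ∀ α ∈ σ, c α * Q.eval α
          = ∑ i ∈ Finset.range (Q.natDegree + 1), Q.coeff i * (c α * α ^ i) := by
        intro α hα
        rw [Polynomial.eval_eq_sum_range, Finset.mul_sum]
        apply Finset.sum_congr rfl
        intro i _
        ring
      rw [Finset.sum_congr rfl this, Finset.sum_comm]
      apply Finset.sum_eq_zero
      intro i _
      rcases Nat.eq_zero_or_pos i with h | h
      · subst h
        simp [hQ0]
      · rw [← Finset.mul_sum, hmomσ i h, mul_zero]
    have heval : ∀ α ∈ σ, α ≠ β → Q.eval α = 0 := by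
      intro α hα hne
      rw [hQ]
      simp only [Polynomial.eval_mul, Polynomial.eval_X, Polynomial.eval_prod,
        Polynomial.eval_sub, Polynomial.eval_C]
      have : ∏ γ ∈ σ.erase β, (α - γ) = 0 :=
        Finset.prod_eq_zero (Finset.mem_erase.mpr ⟨hne, hα⟩) (by ring)
      rw [this, mul_zero]
    have hsingle : ∑ α ∈ σ, c α * Q.eval α = c β * Q.eval β := by
      apply Finset.sum_eq_single_of_mem β hβ
      intro α hα hne
      rw [heval α hα hne, mul_zero]
    have hQβ : Q.eval β ≠ 0 := by
      rw [hQ]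
      simp only [Polynomial.eval_mul, Polynomial.eval_X, Polynomial.eval_prod,
        Polynomial.eval_sub, Polynomial.eval_C]
      apply mul_ne_zero (hσ β hβ)
      rw [Finset.prod_ne_zero_iff]
      intro γ hγ
      have := (Finset.mem_erase.mp hγ).1
      intro h
      exact this (by linarith)
    have : c β * Q.eval β = 0 := by rw [← hsingle]; exact hsum
    exact (mul_eq_zero.mp this).resolve_right hQβ
  refine ⟨?_, hc⟩
  have := hmom 0
  rw [hτ, Finset.sum_insert h0σ] at this
  simp only [pow_zero, mul_one] at this
  have hz : ∑ α ∈ σ, d α = 0 := by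
    rw [Finset.sum_congr rfl (fun α hα => by simp [hd, hσ α hα] : ∀ α ∈ σ, d α = c α)]
    exact Finset.sum_eq_zero (fun α hα => hc α hα)
  have hd0 : d 0 = r := by simp [hd]
  rw [hz, hd0, add_zero] at this
  exact this
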